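/- arXiv:1810.01556 — 4 statements merged into one kernel-verified Lean document; each statement's English description precedes it below -/
import Mathlib

section
/- Let X and Y be real Banach spaces, and let c, δ, C̃, Ĉ > 0 and ε ∈ (0, δ) be constants. Suppose that for each real t ≥ 1 we are given: (i) a continuous linear map A_t : Y → X with operator norm ‖A_t‖ ≤ C̃·t²; (ii) an element b_t ∈ Y with ‖b_t‖ ≤ c·e^{−δt}; (iii) a map Q_t : X → Y with Q_t(0) = 0 such that for every ξ ∈ (0,1] and all x₁, x₂ ∈ X with ‖x₁‖ ≤ ξ and ‖x₂‖ ≤ ξ one has ‖Q_t(x₁) − Q_t(x₂)‖ ≤ Ĉ·ξ·t²·‖x₁ − x₂‖. Then there exist constants C, C', t₀ > 0 such that for every t ≥ t₀, the map T_t : X → X defined by T_t(x) = −A_t(b_t + Q_t(x)) has a fixed point x_t satisfying ‖x_t‖ ≤ C·e^{(−δ+ε)t}, and x_t is the unique fixed point of T_t in the closed ball of radius C'·t^{−4−ε} centered at 0. -/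
open Filter Real

/-- The quantitative contraction-mapping scheme underlying the Main Theorem:
given `A_t` with `‖A_t‖ ≤ C̃ t²`, `b_t` with `‖b_t‖ ≤ c e^{-δ t}`, and a nonlinearity
`Q_t` with the local Lipschitz bound, the map `T_t x = -A_t (b_t + Q_t x)` has a fixed
point of size `≤ C e^{(-δ+ε)t}`, unique in a ball of radius `C' t^{-4-ε}`. -/
theorem stmt_0
    {X Y : Type*} [NormedAddCommGroup X] [NormedSpace ℝ X] [CompleteSpace X]
    [NormedAddCommGroup Y] [NormedSpace ℝ Y] [CompleteSpace Y]
    (c δ Ctil Chat ε : ℝ)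
    (hc : 0 < c) (hδ : 0 < δ) (hCtil : 0 < Ctil) (hChat : 0 < Chat)
    (hε : 0 < ε) (hεδ : ε < δ)
    (A : ℝ → Y →L[ℝ] X) (b : ℝ → Y) (Q : ℝ → X → Y)
    (hA : ∀ t : ℝ, 1 ≤ t → ‖A t‖ ≤ Ctil * t ^ 2)
    (hb : ∀ t : ℝ, 1 ≤ t → ‖b t‖ ≤ c * Real.exp (-δ * t))
    (hQ0 : ∀ t : ℝ, 1 ≤ t → Q t 0 = 0)
    (hQ : ∀ t : ℝ, 1 ≤ t → ∀ ξ : ℝ, 0 < ξ → ξ ≤ 1 →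
      ∀ x₁ x₂ : X, ‖x₁‖ ≤ ξ → ‖x₂‖ ≤ ξ →
        ‖Q t x₁ - Q t x₂‖ ≤ Chat * ξ * t ^ 2 * ‖x₁ - x₂‖) :
    ∃ C C' t₀ : ℝ, 0 < C ∧ 0 < C' ∧ 0 < t₀ ∧
      ∀ t : ℝ, t₀ ≤ t →
        ∃ x : X, (- A t (b t + Q t x)) = x ∧
          ‖x‖ ≤ C * Real.exp ((-δ + ε) * t) ∧
          ∀ y : X, ‖y‖ ≤ C' * t ^ (-4 - ε : ℝ) →
            (- A t (b t + Q t y)) = y → y = x := by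
  set C' : ℝ := min (1 / (2 * Ctil * Chat)) 1 with hC'def
  have hC' : 0 < C' := lt_min (by positivity) one_pos
  have hC'le : C' ≤ 1 / (2 * Ctil * Chat) := min_le_left _ _
  have hC'le1 : C' ≤ 1 := min_le_right _ _
  have hE1 : ∀ᶠ t in atTop, t ^ ((6 : ℝ) + ε) * Real.exp (-δ * t) ≤ C' / (2 * Ctil * c) :=
    (tendsto_rpow_mul_exp_neg_mul_atTop_nhds_zero (6 + ε) δ hδ).eventually
      (eventually_le_nhds (by positivity))
  have hE2 : ∀ᶠ t in atTop, t ^ ((2 : ℝ)) * Real.exp (-ε * t) ≤ 1 :=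
    (tendsto_rpow_mul_exp_neg_mul_atTop_nhds_zero 2 ε hε).eventually
      (eventually_le_nhds one_pos)
  have hE3 : ∀ᶠ t in atTop, (1 : ℝ) ≤ t := eventually_ge_atTop 1
  obtain ⟨a, hP⟩ := Filter.eventually_atTop.mp (hE1.and (hE2.and hE3))
  refine ⟨2 * Ctil * c, C', max a 1, by positivity, hC', by positivity, ?_⟩
  intro t ht
  obtain ⟨E1t, E2t, ht1⟩ := hP t (le_trans (le_max_left a 1) ht)
  have ht0 : (0 : ℝ) < t := lt_of_lt_of_le one_pos ht1
  set r : ℝ := C' * t ^ (-4 - ε : ℝ) with hrdef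
  have hr0 : 0 < r := by positivity
  have hr1 : r ≤ 1 := by
    have h1 : t ^ (-4 - ε : ℝ) ≤ 1 :=
      Real.rpow_le_one_of_one_le_of_nonpos ht1 (by linarith)
    calc r ≤ C' * 1 := by
            exact mul_le_mul_of_nonneg_left h1 hC'.le
      _ ≤ 1 := by linarith
  -- contraction coefficient bound
  have tpow : t ^ (2 : ℕ) * t ^ (2 : ℕ) * t ^ (-4 - ε : ℝ) = t ^ (-ε : ℝ) := by
    rw [← Real.rpow_natCast t 2, ← Real.rpow_add ht0, ← Real.rpow_add ht0]
    norm_num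
    congr 1
    ring
  have htε : t ^ (-ε : ℝ) ≤ 1 := Real.rpow_le_one_of_one_le_of_nonpos ht1 (by linarith)
  have h5 : Ctil * Chat * C' ≤ 1 / 2 := by
    have hcc : Ctil * Chat * (1 / (2 * Ctil * Chat)) = 1 / 2 := by
      field_simp
    nlinarith [mul_le_mul_of_nonneg_left hC'le (mul_pos hCtil hChat).le]
  have hcontr : Ctil * t ^ 2 * (Chat * r * t ^ 2) ≤ 1 / 2 := by
    have heq : Ctil * t ^ 2 * (Chat * r * t ^ 2)
        = (Ctil * Chat * C') * (t ^ (2 : ℕ) * t ^ (2 : ℕ) * t ^ (-4 - ε : ℝ)) := by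
      rw [hrdef]; ring
    rw [heq, tpow]
    calc (Ctil * Chat * C') * t ^ (-ε : ℝ) ≤ (Ctil * Chat * C') * 1 :=
          mul_le_mul_of_nonneg_left htε (by positivity)
      _ ≤ 1 / 2 := by linarith
  -- key Lipschitz estimate on the ball
  have key : ∀ x₁ x₂ : X, ‖x₁‖ ≤ r → ‖x₂‖ ≤ r →
      ‖(- A t (b t + Q t x₁)) - (- A t (b t + Q t x₂))‖ ≤ (1 / 2) * ‖x₁ - x₂‖ := by
    intro x₁ x₂ h₁ h₂
    have hd : (- A t (b t + Q t x₁)) - (- A t (b t + Q t x₂)) = A t (Q t x₂ - Q t x₁) := by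
      rw [map_sub, map_add, map_add]; abel
    rw [hd, norm_sub_rev x₁ x₂]
    calc ‖A t (Q t x₂ - Q t x₁)‖ ≤ ‖A t‖ * ‖Q t x₂ - Q t x₁‖ := (A t).le_opNorm _
      _ ≤ (Ctil * t ^ 2) * (Chat * r * t ^ 2 * ‖x₂ - x₁‖) :=
          mul_le_mul (hA t ht1) (hQ t ht1 r hr0 hr1 x₂ x₁ h₂ h₁) (norm_nonneg _)
            (by positivity)
      _ = (Ctil * t ^ 2 * (Chat * r * t ^ 2)) * ‖x₂ - x₁‖ := by ring
      _ ≤ (1 / 2) * ‖x₂ - x₁‖ := mul_le_mul_of_nonneg_right hcontr (norm_nonneg _)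
  -- norm bound for T
  have hTnorm : ∀ x : X, ‖x‖ ≤ r →
      ‖- A t (b t + Q t x)‖ ≤ Ctil * c * t ^ 2 * Real.exp (-δ * t) + (1 / 2) * ‖x‖ := by
    intro x hx
    rw [norm_neg]
    have hQx : ‖Q t x‖ ≤ Chat * r * t ^ 2 * ‖x‖ := by
      have := hQ t ht1 r hr0 hr1 x 0 hx (by simp [hr0.le])
      simpa [hQ0 t ht1] using this
    have hsum : ‖b t + Q t x‖ ≤ c * Real.exp (-δ * t) + Chat * r * t ^ 2 * ‖x‖ :=
      (norm_add_le _ _).trans (add_le_add (hb t ht1) hQx)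
    calc ‖A t (b t + Q t x)‖ ≤ ‖A t‖ * ‖b t + Q t x‖ := (A t).le_opNorm _
      _ ≤ (Ctil * t ^ 2) * (c * Real.exp (-δ * t) + Chat * r * t ^ 2 * ‖x‖) :=
          mul_le_mul (hA t ht1) hsum (norm_nonneg _) (by positivity)
      _ = Ctil * c * t ^ 2 * Real.exp (-δ * t)
            + (Ctil * t ^ 2 * (Chat * r * t ^ 2)) * ‖x‖ := by ring
      _ ≤ Ctil * c * t ^ 2 * Real.exp (-δ * t) + (1 / 2) * ‖x‖ := by
          have := mul_le_mul_of_nonneg_right hcontr (norm_nonneg x)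
          linarith
  -- smallness of the linear error term
  have hsmall : Ctil * c * t ^ 2 * Real.exp (-δ * t) ≤ r / 2 := by
    have ht2 : (t : ℝ) ^ (2 : ℕ) = t ^ ((6 : ℝ) + ε) * t ^ ((-4 : ℝ) - ε) := by
      rw [← Real.rpow_add ht0,
        show (6 : ℝ) + ε + (-4 - ε) = ((2 : ℕ) : ℝ) by push_cast; ring,
        Real.rpow_natCast]
    have hstep : Ctil * c * t ^ 2 * Real.exp (-δ * t)
        = (Ctil * c) * (t ^ ((6 : ℝ) + ε) * Real.exp (-δ * t)) * t ^ ((-4 : ℝ) - ε) := by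
      rw [ht2]; ring
    rw [hstep]
    calc (Ctil * c) * (t ^ ((6 : ℝ) + ε) * Real.exp (-δ * t)) * t ^ ((-4 : ℝ) - ε)
        ≤ (Ctil * c) * (C' / (2 * Ctil * c)) * t ^ ((-4 : ℝ) - ε) := by
          apply mul_le_mul_of_nonneg_right _ (by positivity)
          exact mul_le_mul_of_nonneg_left E1t (by positivity)
      _ = r / 2 := by rw [hrdef]; field_simp
  -- self-mapping of the closed ball
  have hself : ∀ x : X, ‖x‖ ≤ r → ‖- A t (b t + Q t x)‖ ≤ r := by
    intro x hx
    calc ‖- A t (b t + Q t x)‖ ≤ Ctil * c * t ^ 2 * Real.exp (-δ * t) + (1 / 2) * ‖x‖ :=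
          hTnorm x hx
      _ ≤ r / 2 + (1 / 2) * r := add_le_add hsmall (by linarith)
      _ = r := by ring
  -- fixed point via Banach on the closed ball
  set s : Set X := Metric.closedBall (0 : X) r with hsdef
  have hsc : IsClosed s := Metric.isClosed_closedBall
  haveI : CompleteSpace s := hsc.completeSpace_coe
  haveI : Nonempty s := ⟨⟨0, by simp [hsdef, hr0.le]⟩⟩
  set f : s → s := fun x =>
    ⟨- A t (b t + Q t x.1), by
      exact mem_closedBall_zero_iff.mpr (hself x.1 (mem_closedBall_zero_iff.mp x.2))⟩ with hfdef
  have hcf : ContractingWith (1 / 2 : NNReal) f := by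
    constructor
    · exact_mod_cast (by norm_num : (1/2 : ℝ) < 1)
    · refine LipschitzWith.of_dist_le_mul fun x y => ?_
      rw [Subtype.dist_eq, Subtype.dist_eq, dist_eq_norm, dist_eq_norm]
      have := key x.1 y.1 (mem_closedBall_zero_iff.mp x.2) (mem_closedBall_zero_iff.mp y.2)
      push_cast
      convert this using 2
  set xs : s := ContractingWith.fixedPoint f hcf with hxsdef
  have hfixs : f xs = xs := hcf.fixedPoint_isFixedPt
  have hxfix : (- A t (b t + Q t xs.1)) = xs.1 := congrArg Subtype.val hfixs
  have hxr : ‖xs.1‖ ≤ r := mem_closedBall_zero_iff.mp xs.2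
  refine ⟨xs.1, hxfix, ?_, ?_⟩
  · -- norm bound
    have hb2 : ‖xs.1‖ ≤ 2 * (Ctil * c) * (t ^ 2 * Real.exp (-δ * t)) := by
      have h := hTnorm xs.1 hxr
      rw [hxfix] at h
      nlinarith
    have hexpeq : (t : ℝ) ^ (2 : ℕ) * Real.exp (-δ * t)
        = (t ^ ((2 : ℝ)) * Real.exp (-ε * t)) * Real.exp ((-δ + ε) * t) := by
      rw [mul_assoc, ← Real.exp_add, show -ε * t + (-δ + ε) * t = -δ * t by ring,
        show ((2 : ℝ)) = ((2 : ℕ) : ℝ) by norm_num, Real.rpow_natCast]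
    calc ‖xs.1‖ ≤ 2 * (Ctil * c) * (t ^ 2 * Real.exp (-δ * t)) := hb2
      _ = 2 * (Ctil * c) * ((t ^ ((2 : ℝ)) * Real.exp (-ε * t)) * Real.exp ((-δ + ε) * t)) := by
          rw [hexpeq]
      _ ≤ 2 * (Ctil * c) * (1 * Real.exp ((-δ + ε) * t)) := by
          apply mul_le_mul_of_nonneg_left _ (by positivity)
          exact mul_le_mul_of_nonneg_right E2t (Real.exp_pos _).le
      _ = 2 * Ctil * c * Real.exp ((-δ + ε) * t) := by ring
  · -- uniqueness in the ball
    intro y hy hyfix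
    have hky := key y xs.1 hy hxr
    rw [hyfix, hxfix] at hky
    have h0 : ‖y - xs.1‖ = 0 := le_antisymm (by linarith) (norm_nonneg _)
    exact sub_eq_zero.mp (norm_eq_zero.mp h0)
end

section
/- Let K ≥ 2 be an integer and let u_i : (0,∞) → ℝ, indexed cyclically by i ∈ ℤ/Kℤ, be C² solutions of the radial rank-K Toda system (1/4)(u_i''(r) + u_i'(r)/r) = r^{2/K}·(exp(u_i(r) − u_{i+1}(r)) − exp(u_{i−1}(r) − u_i(r))) for all r > 0, and suppose there exist constants C, c > 0 such that |u_i(r)| + |u_i'(r)| + |u_i''(r)| ≤ C·exp(−c·r^{(K+1)/K}) for all r ≥ 1/4 and all i. Let χ : ℝ → [0,1] be a C² cutoff function with χ(r) = 1 for r ≤ 1/2 and χ(r) = 0 for r ≥ 1. For t > 0 set u_{i,t}(r) := u_i(t^{K/(K+1)}·r) and w_{i,t}(r) := χ(r)·u_{i,t}(r). Then there exist constants c', δ, t₀ > 0 such that for all t ≥ t₀, all i ∈ ℤ/Kℤ, and all r ∈ (0,1]: | −(1/4)(w_{i,t}''(r) + w_{i,t}'(r)/r) + t²·r^{2/K}·(exp(w_{i,t}(r)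 − w_{i+1,t}(r)) − exp(w_{i−1,t}(r) − w_{i,t}(r))) | ≤ c'·e^{−δt}. -/
/-- The rescaled-and-cut-off model solution `w_{i,t}(r) = χ(r) · u_i(t^{K/(K+1)} r)`. -/
noncomputable def cutoffRescale {K : ℕ} (χ : ℝ → ℝ) (u : ZMod K → ℝ → ℝ)
    (t : ℝ) (i : ZMod K) : ℝ → ℝ :=
  fun s => χ s * u i (t ^ ((K : ℝ) / (K + 1)) * s)

set_option maxHeartbeats 2000000 in
/-- Gluing cutoff rank-`K` Toda model solutions produces an approximate solution with
error of size `O(e^{-δ t})` on the unit disk: the `(i,i)`-entry of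
`F(∂̄_E, tφ, h_t^{app})` on a `K×K` block is exponentially small in `t`. -/
theorem stmt_1
    (K : ℕ) (hK : 2 ≤ K)
    (u : ZMod K → ℝ → ℝ)
    (hreg : ∀ i, ContDiffOn ℝ 2 (u i) (Set.Ioi 0))
    (hODE : ∀ i, ∀ r : ℝ, 0 < r →
      (1 / 4) * (deriv (deriv (u i)) r + deriv (u i) r / r) =
        r ^ ((2 : ℝ) / K) *
          (Real.exp (u i r - u (i + 1) r) - Real.exp (u (i - 1) r - u i r)))
    (C c : ℝ) (hC : 0 < C) (hc : 0 < c)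
    (hdecay : ∀ i, ∀ r : ℝ, 1 / 4 ≤ r →
      |u i r| + |deriv (u i) r| + |deriv (deriv (u i)) r| ≤
        C * Real.exp (-c * r ^ (((K : ℝ) + 1) / K)))
    (χ : ℝ → ℝ) (hχ : ContDiff ℝ 2 χ)
    (hχ01 : ∀ r : ℝ, χ r ∈ Set.Icc (0 : ℝ) 1)
    (hχ1 : ∀ r : ℝ, r ≤ 1 / 2 → χ r = 1)
    (hχ0 : ∀ r : ℝ, 1 ≤ r → χ r = 0) :
    ∃ c' δ t₀ : ℝ, 0 < c' ∧ 0 < δ ∧ 0 < t₀ ∧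
      ∀ t : ℝ, t₀ ≤ t → ∀ i : ZMod K, ∀ r : ℝ, 0 < r → r ≤ 1 →
        |(-(1 / 4)) * (deriv (deriv (cutoffRescale χ u t i)) r +
              deriv (cutoffRescale χ u t i) r / r) +
            t ^ 2 * r ^ ((2 : ℝ) / K) *
              (Real.exp (cutoffRescale χ u t i r - cutoffRescale χ u t (i + 1) r) -
                Real.exp (cutoffRescale χ u t (i - 1) r - cutoffRescale χ u t i r))| ≤
          c' * Real.exp (-δ * t) := by
  have hKR : (2:ℝ) ≤ (K:ℝ) := by exact_mod_cast hK
  have hK0 : (0:ℝ) < (K:ℝ) := by linarith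
  have hK1 : (0:ℝ) < (K:ℝ) + 1 := by linarith
  -- χ regularity
  have h21 : ContDiff ℝ ((1:WithTop ℕ∞)+1) χ := by norm_num; exact hχ
  have hχd : ContDiff ℝ 1 (deriv χ) := (contDiff_succ_iff_deriv.mp h21).2.2
  have hχ_diff : Differentiable ℝ χ := hχ.differentiable (by norm_num)
  have hχd_diff : Differentiable ℝ (deriv χ) := hχd.differentiable (by norm_num)
  have hχdd_cont : Continuous (deriv (deriv χ)) := hχd.continuous_deriv le_rfl
  -- bounds for χ derivatives on [1/2, 1]
  obtain ⟨M1, hM1⟩ := (isCompact_Icc (a := (1/2:ℝ)) (b := 1)).exists_bound_of_continuousOn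
    (hχd.continuous.continuousOn)
  obtain ⟨M2, hM2⟩ := (isCompact_Icc (a := (1/2:ℝ)) (b := 1)).exists_bound_of_continuousOn
    (hχdd_cont.continuousOn)
  set M : ℝ := |M1| + |M2| with hMdef
  have hM0 : 0 ≤ M := by positivity
  have hMd : ∀ s ∈ Set.Icc (1/2:ℝ) 1, |deriv χ s| ≤ M := by
    intro s hs
    have h := hM1 s hs
    rw [Real.norm_eq_abs] at h
    have := le_abs_self M1
    have := abs_nonneg M2
    simp only [hMdef]; linarith
  have hMdd : ∀ s ∈ Set.Icc (1/2:ℝ) 1, |deriv (deriv χ) s| ≤ M := by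
    intro s hs
    have h := hM2 s hs
    rw [Real.norm_eq_abs] at h
    have := le_abs_self M2
    have := abs_nonneg M1
    simp only [hMdef]; linarith
  refine ⟨(3*M+35)*C*(1+16/c)^2 + 1, c/8, max 1 ((4/c)*Real.log (2*C)) + 1, ?_, ?_, ?_, ?_⟩
  · have h1 : 0 ≤ (3*M+35)*C*(1+16/c)^2 :=
      mul_nonneg (mul_nonneg (by linarith) hC.le) (sq_nonneg _)
    linarith
  · positivity
  · have := le_max_left (1:ℝ) ((4/c)*Real.log (2*C)); linarith
  intro t ht i r hr0 hr1
  have ht1 : 1 ≤ t := by have := le_max_left (1:ℝ) ((4/c)*Real.log (2*C)); linarith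
  have ht0 : 0 < t := by linarith
  have htlog : (4/c)*Real.log (2*C) ≤ t := by
    have := le_max_right (1:ℝ) ((4/c)*Real.log (2*C)); linarith
  have hD : Real.exp (-(c*t)/4) ≤ 1/(2*C) := by
    have h1 : c * ((4/c)*Real.log (2*C)) ≤ c * t := mul_le_mul_of_nonneg_left htlog hc.le
    have h2 : c * ((4/c)*Real.log (2*C)) = 4 * Real.log (2*C) := by field_simp
    have h3 : -(c*t)/4 ≤ -Real.log (2*C) := by linarith
    calc Real.exp (-(c*t)/4) ≤ Real.exp (-Real.log (2*C)) := Real.exp_le_exp.mpr h3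
      _ = 1/(2*C) := by rw [Real.exp_neg, Real.exp_log (by positivity)]; ring
  set L : ℝ := t ^ ((K:ℝ)/((K:ℝ)+1)) with hLdef
  have hcut : ∀ j : ZMod K, cutoffRescale χ u t j = fun s => χ s * u j (L * s) := fun j => rfl
  have hL0 : 0 < L := Real.rpow_pos_of_pos ht0 _
  have hL1 : 1 ≤ L := Real.one_le_rpow ht1 (by positivity)
  have hLt : L ≤ t := by
    calc L ≤ t ^ (1:ℝ) := Real.rpow_le_rpow_of_exponent_le ht1 (by
        rw [div_le_one hK1]; linarith)
      _ = t := Real.rpow_one t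
  have hLb : L ^ (((K:ℝ)+1)/(K:ℝ)) = t := by
    rw [hLdef, ← Real.rpow_mul ht0.le,
      show (↑K/((↑K:ℝ)+1) * (((↑K:ℝ)+1)/↑K)) = (1:ℝ) by field_simp]
    exact Real.rpow_one t
  have hLsq : L^2 * L^((2:ℝ)/(K:ℝ)) = t^2 := by
    have h1 : L^2 = L^((2:ℝ)) := by
      rw [← Real.rpow_natCast L 2]; norm_num
    rw [h1, ← Real.rpow_add hL0, hLdef, ← Real.rpow_mul ht0.le,
      show (↑K/((↑K:ℝ)+1)) * ((2:ℝ) + 2/↑K) = (2:ℝ) by field_simp,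
      ← Real.rpow_natCast t 2]
    norm_num
  -- derivative facts
  have hu1 : ∀ (j : ZMod K) (x : ℝ), 0 < x → HasDerivAt (u j) (deriv (u j) x) x := by
    intro j x hx
    exact (((hreg j).differentiableOn (by norm_num)).differentiableAt
      (isOpen_Ioi.mem_nhds hx)).hasDerivAt
  have hu2 : ∀ (j : ZMod K) (x : ℝ), 0 < x →
      HasDerivAt (deriv (u j)) (deriv (deriv (u j)) x) x := by
    intro j x hx
    have h2 : ContDiffOn ℝ 1 (deriv (u j)) (Set.Ioi 0) :=
      (hreg j).deriv_of_isOpen isOpen_Ioi (by norm_num)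
    exact ((h2.differentiableOn (by norm_num)).differentiableAt (isOpen_Ioi.mem_nhds hx)).hasDerivAt
  have hcomp : ∀ (j : ZMod K) (x : ℝ), 0 < x →
      HasDerivAt (fun s => u j (L * s)) (deriv (u j) (L * x) * L) x := by
    intro j x hx
    have h := (hu1 j (L*x) (by positivity)).comp x ((hasDerivAt_id x).const_mul L)
    simpa [Function.comp_def] using h
  have hcomp' : ∀ (j : ZMod K) (x : ℝ), 0 < x →
      HasDerivAt (fun s => deriv (u j) (L * s)) (deriv (deriv (u j)) (L * x) * L) x := by
    intro j x hx
    have h := (hu2 j (L*x) (by positivity)).comp x ((hasDerivAt_id x).const_mul L)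
    simpa [Function.comp_def] using h
  have hW1 : ∀ (j : ZMod K) (x : ℝ), 0 < x →
      HasDerivAt (fun s => χ s * u j (L * s))
        (deriv χ x * u j (L*x) + χ x * (deriv (u j) (L*x) * L)) x := by
    intro j x hx
    exact (hχ_diff x).hasDerivAt.mul (hcomp j x hx)
  have hW1eq : ∀ (j : ZMod K) (x : ℝ), 0 < x →
      deriv (fun s => χ s * u j (L * s)) x
        = deriv χ x * u j (L*x) + χ x * (deriv (u j) (L*x) * L) := by
    intro j x hx; exact (hW1 j x hx).deriv
  have hW2eq : ∀ (j : ZMod K) (x : ℝ), 0 < x →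
      deriv (deriv (fun s => χ s * u j (L * s))) x
        = deriv (deriv χ) x * u j (L*x) + deriv χ x * (deriv (u j) (L*x) * L)
          + (deriv χ x * (deriv (u j) (L*x) * L) + χ x * (deriv (deriv (u j)) (L*x) * L * L)) := by
    intro j x hx
    have heq : deriv (fun s => χ s * u j (L * s))
        =ᶠ[nhds x] fun s => deriv χ s * u j (L*s) + χ s * (deriv (u j) (L*s) * L) := by
      filter_upwards [isOpen_Ioi.mem_nhds (Set.mem_Ioi.mpr hx)] with s hs
      exact (hW1 j s hs).deriv
    rw [heq.deriv_eq]
    exact (((hχd_diff x).hasDerivAt.mul (hcomp j x hx)).add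
      ((hχ_diff x).hasDerivAt.mul ((hcomp' j x hx).mul_const L))).deriv
  simp only [hcut]
  rw [hW2eq i r hr0, hW1eq i r hr0]
  rcases lt_or_ge r (1/2) with hrh | hrh
  · -- region where χ ≡ 1: exact solution
    have hχr : χ r = 1 := hχ1 r hrh.le
    have hdχr : deriv χ r = 0 := by
      have h : χ =ᶠ[nhds r] fun _ => (1:ℝ) := by
        filter_upwards [Iio_mem_nhds hrh] with s hs
        exact hχ1 s (le_of_lt hs)
      rw [h.deriv_eq]; exact deriv_const r 1
    have hddχr : deriv (deriv χ) r = 0 := by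
      have h : deriv χ =ᶠ[nhds r] fun _ => (0:ℝ) := by
        filter_upwards [Iio_mem_nhds hrh] with s hs
        have h2 : χ =ᶠ[nhds s] fun _ => (1:ℝ) := by
          filter_upwards [Iio_mem_nhds hs] with y hy
          exact hχ1 y (le_of_lt hy)
        rw [h2.deriv_eq]; exact deriv_const s 1
      rw [h.deriv_eq]; exact deriv_const r 0
    rw [hχr, hdχr, hddχr]
    have hrne : r ≠ 0 := ne_of_gt hr0
    have hLne : L ≠ 0 := ne_of_gt hL0
    have hmul : (L*r)^((2:ℝ)/(K:ℝ)) = L^((2:ℝ)/(K:ℝ)) * r^((2:ℝ)/(K:ℝ)) :=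
      Real.mul_rpow hL0.le hr0.le
    have h := hODE i (L*r) (by positivity)
    rw [hmul] at h
    set E := Real.exp (u i (L*r) - u (i+1) (L*r)) - Real.exp (u (i-1) (L*r) - u i (L*r)) with hE
    have e1 : (1:ℝ)/4 * (deriv (deriv (u i)) (L*r) * L * L + deriv (u i) (L*r) * L / r)
        = t^2 * r^((2:ℝ)/(K:ℝ)) * E := by
      calc (1:ℝ)/4 * (deriv (deriv (u i)) (L*r) * L * L + deriv (u i) (L*r) * L / r)
          = L^2 * ((1:ℝ)/4 * (deriv (deriv (u i)) (L*r) + deriv (u i) (L*r) / (L*r))) := by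
            field_simp
        _ = L^2 * (L^((2:ℝ)/(K:ℝ)) * r^((2:ℝ)/(K:ℝ)) * E) := by rw [h]
        _ = (L^2 * L^((2:ℝ)/(K:ℝ))) * r^((2:ℝ)/(K:ℝ)) * E := by ring
        _ = t^2 * r^((2:ℝ)/(K:ℝ)) * E := by rw [hLsq]
    have hz : -(1/4) * ((0 * u i (L * r) + 0 * (deriv (u i) (L * r) * L) +
          (0 * (deriv (u i) (L * r) * L) + 1 * (deriv (deriv (u i)) (L * r) * L * L))) +
          (0 * u i (L * r) + 1 * (deriv (u i) (L * r) * L)) / r) +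
        t ^ 2 * r ^ ((2:ℝ) / (K:ℝ)) *
          (Real.exp (1 * u i (L * r) - 1 * u (i + 1) (L * r)) -
            Real.exp (1 * u (i - 1) (L * r) - 1 * u i (L * r))) = 0 := by
      simp only [one_mul, zero_mul, zero_add, add_zero]
      rw [← hE]; linarith [e1]
    rw [hz]
    simp only [abs_zero]
    positivity
  · -- region [1/2, 1]: decay estimates
    have hrI : r ∈ Set.Icc (1/2:ℝ) 1 := ⟨hrh, hr1⟩
    have hρ : (1:ℝ)/4 ≤ L * r := by
      have h := mul_le_mul hL1 hrh (by norm_num) hL0.le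
      linarith
    set D := C * Real.exp (-(c*t)/4) with hDdef
    have hD0 : 0 ≤ D := by positivity
    have hLabs : |L| = L := abs_of_pos hL0
    have hρβ : Real.exp (-c * (L*r) ^ (((K:ℝ)+1)/(K:ℝ))) ≤ Real.exp (-(c*t)/4) := by
      have hmul : (L*r)^(((K:ℝ)+1)/(K:ℝ))
          = L^(((K:ℝ)+1)/(K:ℝ)) * r^(((K:ℝ)+1)/(K:ℝ)) := Real.mul_rpow hL0.le hr0.le
      have hβ2 : ((K:ℝ)+1)/(K:ℝ) ≤ 2 := by
        rw [div_le_iff₀ hK0]; linarith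
      have hr2 : r ^ ((2:ℝ)) ≤ r ^ (((K:ℝ)+1)/(K:ℝ)) :=
        Real.rpow_le_rpow_of_exponent_ge hr0 hr1 hβ2
      have hr2' : (1:ℝ)/4 ≤ r ^ (((K:ℝ)+1)/(K:ℝ)) := by
        have he : r ^ ((2:ℝ)) = r^2 := by
          rw [← Real.rpow_natCast r 2]; norm_num
        rw [he] at hr2
        have hsq : (1/2:ℝ)*(1/2) ≤ r*r :=
          mul_le_mul hrh hrh (by norm_num) (le_trans (by norm_num) hrh)
        have hr2eq : r^2 = r*r := sq r
        linarith [hr2, hsq, hr2eq]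
      have hkey : t/4 ≤ (L*r)^(((K:ℝ)+1)/(K:ℝ)) := by
        rw [hmul, hLb]
        have := mul_le_mul_of_nonneg_left hr2' ht0.le
        linarith
      apply Real.exp_le_exp.mpr
      have := mul_le_mul_of_nonneg_left hkey hc.le
      linarith
    have hub : ∀ j : ZMod K, |u j (L*r)| ≤ D ∧ |deriv (u j) (L*r)| ≤ D ∧
        |deriv (deriv (u j)) (L*r)| ≤ D := by
      intro j
      have h := (hdecay j (L*r) hρ).trans (mul_le_mul_of_nonneg_left hρβ hC.le)
      rw [← hDdef] at h
      have h1 := abs_nonneg (u j (L*r))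
      have h2 := abs_nonneg (deriv (u j) (L*r))
      have h3 := abs_nonneg (deriv (deriv (u j)) (L*r))
      exact ⟨by linarith, by linarith, by linarith⟩
    obtain ⟨hb0, hb1, hb2⟩ := hub i
    obtain ⟨hb0p, -, -⟩ := hub (i+1)
    obtain ⟨hb0m, -, -⟩ := hub (i-1)
    have hdχ : |deriv χ r| ≤ M := hMd r hrI
    have hddχ : |deriv (deriv χ) r| ≤ M := hMdd r hrI
    have hχa : |χ r| ≤ 1 := by
      have h := hχ01 r
      rw [abs_le]; exact ⟨by linarith [h.1], h.2⟩
    have hDhalf : D ≤ 1/2 := by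
      calc D ≤ C * (1/(2*C)) := mul_le_mul_of_nonneg_left hD hC.le
        _ = 1/2 := by field_simp
    set a := χ r * u i (L*r) - χ r * u (i+1) (L*r) with ha
    set b := χ r * u (i-1) (L*r) - χ r * u i (L*r) with hbdef
    have hprod : ∀ x : ℝ, |x| ≤ D → |χ r * x| ≤ D := by
      intro x hx
      rw [abs_mul]
      calc |χ r| * |x| ≤ 1 * D := mul_le_mul hχa hx (abs_nonneg _) zero_le_one
        _ = D := one_mul D
    have haD : |a| ≤ 2*D := by
      calc |a| ≤ |χ r * u i (L*r)| + |χ r * u (i+1) (L*r)| := abs_sub _ _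
        _ ≤ D + D := add_le_add (hprod _ hb0) (hprod _ hb0p)
        _ = 2*D := by ring
    have hbD : |b| ≤ 2*D := by
      calc |b| ≤ |χ r * u (i-1) (L*r)| + |χ r * u i (L*r)| := abs_sub _ _
        _ ≤ D + D := add_le_add (hprod _ hb0m) (hprod _ hb0)
        _ = 2*D := by ring
    have hexp : |Real.exp a - Real.exp b| ≤ 8*D := by
      have ha1 : |a| ≤ 1 := by linarith
      have hb1' : |b| ≤ 1 := by linarith
      calc |Real.exp a - Real.exp b|
          ≤ |Real.exp a - 1| + |1 - Real.exp b| := abs_sub_le _ 1 _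
        _ = |Real.exp a - 1| + |Real.exp b - 1| := by rw [abs_sub_comm 1]
        _ ≤ 2*|a| + 2*|b| :=
            add_le_add (Real.abs_exp_sub_one_le ha1) (Real.abs_exp_sub_one_le hb1')
        _ ≤ 8*D := by linarith
    have hrpow1 : r ^ ((2:ℝ)/(K:ℝ)) ≤ 1 := Real.rpow_le_one hr0.le hr1 (by positivity)
    have hrpow0 : 0 ≤ r ^ ((2:ℝ)/(K:ℝ)) := Real.rpow_nonneg hr0.le _
    set X1 := deriv (deriv χ) r * u i (L*r) + deriv χ r * (deriv (u i) (L*r) * L)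
      + (deriv χ r * (deriv (u i) (L*r) * L) + χ r * (deriv (deriv (u i)) (L*r) * L * L))
      with hX1
    set X2 := deriv χ r * u i (L*r) + χ r * (deriv (u i) (L*r) * L) with hX2
    have hterm2 : |deriv χ r * (deriv (u i) (L*r) * L)| ≤ M*(D*t) := by
      rw [abs_mul, abs_mul, hLabs]
      exact mul_le_mul hdχ (mul_le_mul hb1 hLt hL0.le hD0)
        (mul_nonneg (abs_nonneg _) hL0.le) hM0
    have hX1b : |X1| ≤ M*D + M*(D*t) + (M*(D*t) + D*(t*t)) := by
      have h1 : |deriv (deriv χ) r * u i (L*r)| ≤ M*D := by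
        rw [abs_mul]; exact mul_le_mul hddχ hb0 (abs_nonneg _) hM0
      have h4 : |χ r * (deriv (deriv (u i)) (L*r) * L * L)| ≤ D*(t*t) := by
        rw [abs_mul, abs_mul, abs_mul, hLabs]
        have hinner : |deriv (deriv (u i)) (L*r)| * L * L ≤ D * t * t :=
          mul_le_mul (mul_le_mul hb2 hLt hL0.le hD0) hLt hL0.le (mul_nonneg hD0 ht0.le)
        have hnn : 0 ≤ |deriv (deriv (u i)) (L*r)| * L * L :=
          mul_nonneg (mul_nonneg (abs_nonneg _) hL0.le) hL0.le
        calc |χ r| * (|deriv (deriv (u i)) (L*r)| * L * L)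
            ≤ 1 * (D * t * t) := mul_le_mul hχa hinner hnn zero_le_one
          _ = D*(t*t) := by ring
      calc |X1| ≤ |deriv (deriv χ) r * u i (L*r) + deriv χ r * (deriv (u i) (L*r) * L)|
            + |deriv χ r * (deriv (u i) (L*r) * L) + χ r * (deriv (deriv (u i)) (L*r) * L * L)| :=
          abs_add_le _ _
        _ ≤ (|deriv (deriv χ) r * u i (L*r)| + |deriv χ r * (deriv (u i) (L*r) * L)|)
            + (|deriv χ r * (deriv (u i) (L*r) * L)| + |χ r * (deriv (deriv (u i)) (L*r) * L * L)|) :=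
          add_le_add (abs_add_le _ _) (abs_add_le _ _)
        _ ≤ M*D + M*(D*t) + (M*(D*t) + D*(t*t)) := by
          have := hterm2; linarith [h1, h4]
    have hX2b : |X2| ≤ M*D + D*t := by
      have h1 : |deriv χ r * u i (L*r)| ≤ M*D := by
        rw [abs_mul]; exact mul_le_mul hdχ hb0 (abs_nonneg _) hM0
      have h2 : |χ r * (deriv (u i) (L*r) * L)| ≤ D*t := by
        rw [abs_mul, abs_mul, hLabs]
        have hnn : 0 ≤ |deriv (u i) (L*r)| * L := mul_nonneg (abs_nonneg _) hL0.le
        calc |χ r| * (|deriv (u i) (L*r)| * L) ≤ 1 * (D*t) :=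
            mul_le_mul hχa (mul_le_mul hb1 hLt hL0.le hD0) hnn zero_le_one
          _ = D*t := one_mul _
      calc |X2| ≤ |deriv χ r * u i (L*r)| + |χ r * (deriv (u i) (L*r) * L)| := abs_add_le _ _
        _ ≤ M*D + D*t := add_le_add h1 h2
    have hfrac : |X2 / r| ≤ 2*(M*D + D*t) := by
      rw [abs_div, abs_of_pos hr0, div_le_iff₀ hr0]
      have hnn : 0 ≤ M*D + D*t :=
        add_nonneg (mul_nonneg hM0 hD0) (mul_nonneg hD0 ht0.le)
      have h := mul_le_mul_of_nonneg_left (by linarith : (1:ℝ) ≤ 2*r) hnn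
      linarith [hX2b, h]
    have hA : |(-(1/4):ℝ) * (X1 + X2/r)| ≤ (1/4)*(|X1| + |X2/r|) := by
      rw [abs_mul]
      have : |(-(1/4):ℝ)| = 1/4 := by norm_num
      rw [this]
      exact mul_le_mul_of_nonneg_left (abs_add_le _ _) (by norm_num)
    have hB : |t^2 * r^((2:ℝ)/(K:ℝ)) * (Real.exp a - Real.exp b)| ≤ t^2 * (8*D) := by
      rw [abs_mul, abs_mul, abs_of_nonneg (sq_nonneg t), abs_of_nonneg hrpow0]
      calc t^2 * r^((2:ℝ)/(K:ℝ)) * |Real.exp a - Real.exp b|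
          ≤ (t^2 * 1) * (8*D) := by
            apply mul_le_mul (mul_le_mul le_rfl hrpow1 hrpow0 (sq_nonneg t)) hexp
              (abs_nonneg _) (by positivity)
        _ = t^2 * (8*D) := by ring
    have hpoly : (1/4)*(|X1| + |X2/r|) + t^2 * (8*D) ≤ (3*M+35)*D*(1+t)^2 := by
      have h1 : 0 ≤ D*M := mul_nonneg hD0 hM0
      have h2 : 0 ≤ D*(M*t) := mul_nonneg hD0 (mul_nonneg hM0 ht0.le)
      have h3 : 0 ≤ D*(M*t^2) := mul_nonneg hD0 (mul_nonneg hM0 (sq_nonneg t))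
      have h4 : 0 ≤ D*t := mul_nonneg hD0 ht0.le
      have h5 : 0 ≤ D*t^2 := mul_nonneg hD0 (sq_nonneg t)
      have hid : (3*M+35)*D*(1+t)^2 -
          ((1/4)*((M*D + M*(D*t) + (M*(D*t) + D*(t*t))) + 2*(M*D + D*t)) + t^2*(8*D))
          = (9/4)*(D*M) + 35*D + (11/2)*(D*(M*t)) + (139/2)*(D*t)
            + 3*(D*(M*t^2)) + (107/4)*(D*t^2) := by ring
      clear_value X1 X2 D M L
      linarith [hX1b, hfrac, hid, h1, h2, h3, h4, h5, hD0]
    have het : 1 + t ≤ (1+16/c)*Real.exp (c*t/16) := by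
      have h1 := Real.add_one_le_exp (c*t/16)
      have h2 : (16/c)*(c*t/16) = t := by field_simp
      have h3 : 0 ≤ (16:ℝ)/c := by positivity
      have h4 := mul_le_mul_of_nonneg_left h1 h3
      have h6 : 0 ≤ c*t/16 := by positivity
      have h5 : (1:ℝ) ≤ Real.exp (c*t/16) := by linarith
      have h7 : (1+16/c)*Real.exp (c*t/16)
          = Real.exp (c*t/16) + (16/c)*Real.exp (c*t/16) := by ring
      linarith [h4, h5, h2, h7, h3]
    have hsq : (1+t)^2 ≤ (1+16/c)^2 * Real.exp (c*t/16)^2 := by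
      have h0 : (0:ℝ) ≤ 1 + t := by linarith
      calc (1+t)^2 ≤ ((1+16/c)*Real.exp (c*t/16))^2 := by
            apply pow_le_pow_left₀ h0 het
        _ = (1+16/c)^2 * Real.exp (c*t/16)^2 := by ring
    have hexp2 : Real.exp (c*t/16)^2 * Real.exp (-(c*t)/4) = Real.exp (-(c/8)*t) := by
      rw [sq, ← Real.exp_add, ← Real.exp_add]; congr 1; ring
    calc |(-(1/4):ℝ) * (X1 + X2/r) + t^2 * r^((2:ℝ)/(K:ℝ)) * (Real.exp a - Real.exp b)|
        ≤ |(-(1/4):ℝ) * (X1 + X2/r)| + |t^2 * r^((2:ℝ)/(K:ℝ)) * (Real.exp a - Real.exp b)| :=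
        abs_add_le _ _
      _ ≤ (1/4)*(|X1| + |X2/r|) + t^2 * (8*D) := add_le_add hA hB
      _ ≤ (3*M+35)*D*(1+t)^2 := hpoly
      _ = (3*M+35)*C*(1+t)^2 * Real.exp (-(c*t)/4) := by rw [hDdef]; ring
      _ ≤ (3*M+35)*C*((1+16/c)^2 * Real.exp (c*t/16)^2) * Real.exp (-(c*t)/4) := by
          apply mul_le_mul_of_nonneg_right _ (Real.exp_nonneg _)
          exact mul_le_mul_of_nonneg_left hsq (mul_nonneg (by linarith) hC.le)
      _ = (3*M+35)*C*(1+16/c)^2 * (Real.exp (c*t/16)^2 * Real.exp (-(c*t)/4)) := by ring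
      _ = (3*M+35)*C*(1+16/c)^2 * Real.exp (-(c/8)*t) := by rw [hexp2]
      _ ≤ ((3*M+35)*C*(1+16/c)^2 + 1) * Real.exp (-(c/8)*t) :=
          mul_le_mul_of_nonneg_right (by linarith) (Real.exp_nonneg _)
end

section
/- Let ν ∈ ℝ, ℓ ∈ ℤ, b ∈ ℝ, and a, a' ∈ ℂ. Define ψ : (0,∞) × ℝ → ℂ by ψ(r,θ) = r^ν·(a·e^{iℓθ} + a'·e^{−iℓθ}). Then for all r > 0 and θ ∈ ℝ, r∂_r(r∂_rψ) + ∂_θ²ψ + 4ib·∂_θψ − 4b²·ψ = r^ν·( a·e^{iℓθ}·(ν² − (ℓ + 2b)²) + a'·e^{−iℓθ}·(ν² − (ℓ − 2b)²) ). Moreover, if ℓ ≠ 0, then this expression vanishes for all (r,θ) if and only if (a = 0 or ν² = (ℓ + 2b)²) and (a' = 0 or ν² = (ℓ − 2b)²). -/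
/-- `ψ(r,θ) = r^ν (a e^{iℓθ} + a' e^{-iℓθ})` with `ν` real. -/
noncomputable def psiPair (ν : ℝ) (ℓ : ℤ) (a a' : ℂ) : ℝ → ℝ → ℂ :=
  fun r θ => ((r ^ ν : ℝ) : ℂ) *
    (a * Complex.exp (Complex.I * ℓ * θ) + a' * Complex.exp (-(Complex.I * ℓ * θ)))

lemma hasDerivAt_cexp_mul (c : ℂ) (θ : ℝ) :
    HasDerivAt (fun φ : ℝ => Complex.exp (c * φ)) (c * Complex.exp (c * θ)) θ := by
  have h : HasDerivAt (fun φ : ℝ => (φ : ℂ)) 1 θ := by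
    simpa using (hasDerivAt_id θ).ofReal_comp
  simpa [mul_comm] using (h.const_mul c).cexp

lemma hasDerivAt_pair (ℓ : ℤ) (a a' : ℂ) (θ : ℝ) :
    HasDerivAt (fun φ : ℝ => a * Complex.exp (Complex.I * ℓ * φ)
        + a' * Complex.exp (-(Complex.I * ℓ * φ)))
      (Complex.I * ℓ * (a * Complex.exp (Complex.I * ℓ * θ))
        - Complex.I * ℓ * (a' * Complex.exp (-(Complex.I * ℓ * θ)))) θ := by
  have h1 := (hasDerivAt_cexp_mul (Complex.I * ℓ) θ).const_mul a
  have h2 := (hasDerivAt_cexp_mul (-(Complex.I * ℓ)) θ).const_mul a'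
  have h := h1.add h2
  simp only [neg_mul] at h ⊢
  exact h.congr_deriv (by ring)

lemma hasDerivAt_pair2 (ℓ : ℤ) (a a' : ℂ) (θ : ℝ) :
    HasDerivAt (fun φ : ℝ => Complex.I * ℓ * (a * Complex.exp (Complex.I * ℓ * φ))
        - Complex.I * ℓ * (a' * Complex.exp (-(Complex.I * ℓ * φ))))
      ((Complex.I * ℓ) ^ 2 * (a * Complex.exp (Complex.I * ℓ * θ))
        + (Complex.I * ℓ) ^ 2 * (a' * Complex.exp (-(Complex.I * ℓ * θ)))) θ := by
  have h1 := ((hasDerivAt_cexp_mul (Complex.I * ℓ) θ).const_mul a).const_mul (Complex.I * (ℓ:ℂ))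
  have h2 := ((hasDerivAt_cexp_mul (-(Complex.I * ℓ)) θ).const_mul a').const_mul (Complex.I * (ℓ:ℂ))
  have h := h1.sub h2
  simp only [neg_mul] at h ⊢
  exact h.congr_deriv (by ring)

/-- Main computation (first half of `stmt_6`). -/
lemma stmt_6_main (ν : ℝ) (ℓ : ℤ) (b : ℝ) (a a' : ℂ) :
    ∀ r : ℝ, 0 < r → ∀ θ : ℝ,
      (r : ℂ) * deriv (fun s : ℝ => (s : ℂ) *
            deriv (fun s' : ℝ => psiPair ν ℓ a a' s' θ) s) r +
          deriv (deriv (fun φ : ℝ => psiPair ν ℓ a a' r φ)) θ +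
          4 * Complex.I * (b : ℂ) * deriv (fun φ : ℝ => psiPair ν ℓ a a' r φ) θ -
          4 * (b : ℂ) ^ 2 * psiPair ν ℓ a a' r θ =
        ((r ^ ν : ℝ) : ℂ) *
          (a * Complex.exp (Complex.I * ℓ * θ) *
              (((ν : ℂ)) ^ 2 - ((ℓ : ℂ) + 2 * (b : ℂ)) ^ 2) +
            a' * Complex.exp (-(Complex.I * ℓ * θ)) *
              (((ν : ℂ)) ^ 2 - ((ℓ : ℂ) - 2 * (b : ℂ)) ^ 2)) := by
  intro r hr θ
  simp only [psiPair]
  set E : ℂ := Complex.exp (Complex.I * ℓ * θ) with hE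
  set Eb : ℂ := Complex.exp (-(Complex.I * ℓ * θ)) with hEb
  set g : ℂ := a * E + a' * Eb with hg
  -- angular first derivative
  have hθ1 : deriv (fun φ : ℝ => ((r ^ ν : ℝ) : ℂ) *
      (a * Complex.exp (Complex.I * ℓ * φ) + a' * Complex.exp (-(Complex.I * ℓ * φ)))) θ
      = ((r ^ ν : ℝ) : ℂ) * (Complex.I * ℓ * (a * E) - Complex.I * ℓ * (a' * Eb)) :=
    ((hasDerivAt_pair ℓ a a' θ).const_mul _).deriv
  -- angular second derivative
  have hfun : deriv (fun φ : ℝ => ((r ^ ν : ℝ) : ℂ) *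
      (a * Complex.exp (Complex.I * ℓ * φ) + a' * Complex.exp (-(Complex.I * ℓ * φ))))
      = fun φ : ℝ => ((r ^ ν : ℝ) : ℂ) *
        (Complex.I * ℓ * (a * Complex.exp (Complex.I * ℓ * φ))
          - Complex.I * ℓ * (a' * Complex.exp (-(Complex.I * ℓ * φ)))) := by
    funext φ
    exact ((hasDerivAt_pair ℓ a a' φ).const_mul _).deriv
  have hθ2 : deriv (deriv (fun φ : ℝ => ((r ^ ν : ℝ) : ℂ) *
      (a * Complex.exp (Complex.I * ℓ * φ) + a' * Complex.exp (-(Complex.I * ℓ * φ))))) θ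
      = ((r ^ ν : ℝ) : ℂ) * ((Complex.I * ℓ) ^ 2 * (a * E) + (Complex.I * ℓ) ^ 2 * (a' * Eb)) := by
    rw [hfun]
    exact ((hasDerivAt_pair2 ℓ a a' θ).const_mul _).deriv
  -- radial derivatives
  have hrad : ∀ s : ℝ, 0 < s →
      HasDerivAt (fun s' : ℝ => ((s' ^ ν : ℝ) : ℂ) * g) (((ν * s ^ (ν - 1) : ℝ) : ℂ) * g) s :=
    fun s hs =>
      ((Real.hasDerivAt_rpow_const (Or.inl hs.ne')).ofReal_comp).mul_const g
  have hEq : (fun s : ℝ => (s : ℂ) * deriv (fun s' : ℝ => ((s' ^ ν : ℝ) : ℂ) * g) s)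
      =ᶠ[nhds r] (fun s : ℝ => ((ν * s ^ ν : ℝ) : ℂ) * g) := by
    filter_upwards [eventually_gt_nhds hr] with s hs
    rw [(hrad s hs).deriv]
    have hs' : s ^ ν = s ^ (ν - 1) * s := by
      rw [← Real.rpow_add_one hs.ne' (ν - 1), sub_add_cancel]
    push_cast [hs']
    ring
  have hrd : deriv (fun s : ℝ => (s : ℂ) * deriv (fun s' : ℝ => ((s' ^ ν : ℝ) : ℂ) * g) s) r
      = ((ν * (ν * r ^ (ν - 1)) : ℝ) : ℂ) * g := by
    rw [hEq.deriv_eq]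
    exact (((Real.hasDerivAt_rpow_const (Or.inl hr.ne')).const_mul ν).ofReal_comp.mul_const g).deriv
  rw [hrd, hθ2, hθ1]
  have key : ((r ^ ν : ℝ) : ℂ) = (r : ℂ) * ((r ^ (ν - 1) : ℝ) : ℂ) := by
    have hr' : r ^ ν = r ^ (ν - 1) * r := by
      rw [← Real.rpow_add_one hr.ne' (ν - 1), sub_add_cancel]
    rw [hr', Complex.ofReal_mul, mul_comm]
  push_cast
  rw [hg]
  linear_combination (-(ν:ℂ)^2 * (a * E + a' * Eb)) * key +
    (((r ^ ν : ℝ) : ℂ) * ((ℓ:ℂ)^2 * (a * E + a' * Eb) + 4 * b * ℓ * (a * E - a' * Eb))) *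
      Complex.I_sq

/-- Indicial-root computation for the coupled pair of off-diagonal blocks: the model
operator `(r∂_r)² + (∂_θ + 2ib)²` applied to `ψ(r,θ) = r^ν(a e^{iℓθ} + a' e^{-iℓθ})` gives
`r^ν (a e^{iℓθ}(ν² - (ℓ+2b)²) + a' e^{-iℓθ}(ν² - (ℓ-2b)²))`; for `ℓ ≠ 0` this vanishes
identically iff `(a = 0 ∨ ν² = (ℓ+2b)²)` and `(a' = 0 ∨ ν² = (ℓ-2b)²)`. -/
theorem stmt_6 (ν : ℝ) (ℓ : ℤ) (b : ℝ) (a a' : ℂ) :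
    (∀ r : ℝ, 0 < r → ∀ θ : ℝ,
      (r : ℂ) * deriv (fun s : ℝ => (s : ℂ) *
            deriv (fun s' : ℝ => psiPair ν ℓ a a' s' θ) s) r +
          deriv (deriv (fun φ : ℝ => psiPair ν ℓ a a' r φ)) θ +
          4 * Complex.I * (b : ℂ) * deriv (fun φ : ℝ => psiPair ν ℓ a a' r φ) θ -
          4 * (b : ℂ) ^ 2 * psiPair ν ℓ a a' r θ =
        ((r ^ ν : ℝ) : ℂ) *
          (a * Complex.exp (Complex.I * ℓ * θ) *
              (((ν : ℂ)) ^ 2 - ((ℓ : ℂ) + 2 * (b : ℂ)) ^ 2) +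
            a' * Complex.exp (-(Complex.I * ℓ * θ)) *
              (((ν : ℂ)) ^ 2 - ((ℓ : ℂ) - 2 * (b : ℂ)) ^ 2))) ∧
    (ℓ ≠ 0 →
      ((∀ r : ℝ, 0 < r → ∀ θ : ℝ,
        (r : ℂ) * deriv (fun s : ℝ => (s : ℂ) *
              deriv (fun s' : ℝ => psiPair ν ℓ a a' s' θ) s) r +
            deriv (deriv (fun φ : ℝ => psiPair ν ℓ a a' r φ)) θ +
            4 * Complex.I * (b : ℂ) * deriv (fun φ : ℝ => psiPair ν ℓ a a' r φ) θ -
            4 * (b : ℂ) ^ 2 * psiPair ν ℓ a a' r θ = 0) ↔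
        ((a = 0 ∨ ν ^ 2 = ((ℓ : ℝ) + 2 * b) ^ 2) ∧
          (a' = 0 ∨ ν ^ 2 = ((ℓ : ℝ) - 2 * b) ^ 2)))) := by
  have main := stmt_6_main ν ℓ b a a'
  refine ⟨main, fun hℓ0 => ?_⟩
  set c₁ : ℂ := ((ν : ℂ)) ^ 2 - ((ℓ : ℂ) + 2 * (b : ℂ)) ^ 2 with hc₁
  set c₂ : ℂ := ((ν : ℂ)) ^ 2 - ((ℓ : ℂ) - 2 * (b : ℂ)) ^ 2 with hc₂
  have hc₁' : c₁ = ((ν ^ 2 - ((ℓ : ℝ) + 2 * b) ^ 2 : ℝ) : ℂ) := by rw [hc₁]; push_cast; ring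
  have hc₂' : c₂ = ((ν ^ 2 - ((ℓ : ℝ) - 2 * b) ^ 2 : ℝ) : ℂ) := by rw [hc₂]; push_cast; ring
  have hc₁0 : c₁ = 0 ↔ ν ^ 2 = ((ℓ : ℝ) + 2 * b) ^ 2 := by
    rw [hc₁', Complex.ofReal_eq_zero, sub_eq_zero]
  have hc₂0 : c₂ = 0 ↔ ν ^ 2 = ((ℓ : ℝ) - 2 * b) ^ 2 := by
    rw [hc₂', Complex.ofReal_eq_zero, sub_eq_zero]
  constructor
  · intro H
    have H' : ∀ θ : ℝ, a * Complex.exp (Complex.I * ℓ * θ) * c₁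
        + a' * Complex.exp (-(Complex.I * ℓ * θ)) * c₂ = 0 := by
      intro θ
      have h := (main 1 one_pos θ).symm.trans (H 1 one_pos θ)
      simpa [Real.one_rpow] using h
    have e0 : a * c₁ + a' * c₂ = 0 := by simpa using H' 0
    set θ₀ : ℝ := Real.pi / (2 * ℓ) with hθ₀
    have hℓR : (ℓ : ℝ) ≠ 0 := Int.cast_ne_zero.2 hℓ0
    have hmul : Complex.I * ℓ * (θ₀ : ℂ) = ((Real.pi / 2 : ℝ) : ℂ) * Complex.I := by
      have h2 : ((ℓ : ℂ)) * ((θ₀ : ℝ) : ℂ) = ((Real.pi / 2 : ℝ) : ℂ) := by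
        rw [← Complex.ofReal_intCast, ← Complex.ofReal_mul]
        congr 1
        rw [hθ₀]
        field_simp
      rw [mul_assoc, h2, mul_comm]
    have hEI : Complex.exp (Complex.I * ℓ * (θ₀ : ℂ)) = Complex.I := by
      rw [hmul, Complex.exp_mul_I]
      simp [← Complex.ofReal_cos, ← Complex.ofReal_sin, Real.cos_pi_div_two, Real.sin_pi_div_two]
    have hEbI : Complex.exp (-(Complex.I * ℓ * (θ₀ : ℂ))) = -Complex.I := by
      rw [Complex.exp_neg, hEI, Complex.inv_I]
    have e1 : a * Complex.I * c₁ + a' * (-Complex.I) * c₂ = 0 := by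
      have := H' θ₀
      rw [hEI, hEbI] at this
      linear_combination this
    have h3 : a * c₁ - a' * c₂ = 0 := by
      have hI : Complex.I * (a * c₁ - a' * c₂) = 0 := by linear_combination e1
      rcases mul_eq_zero.1 hI with h | h
      · exact absurd h Complex.I_ne_zero
      · exact h
    have hx : a * c₁ = 0 := by linear_combination (1/2 : ℂ) * e0 + (1/2 : ℂ) * h3
    have hy : a' * c₂ = 0 := by linear_combination (1/2 : ℂ) * e0 - (1/2 : ℂ) * h3
    refine ⟨?_, ?_⟩
    · rcases mul_eq_zero.1 hx with h | h
      · exact Or.inl h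
      · exact Or.inr (hc₁0.1 h)
    · rcases mul_eq_zero.1 hy with h | h
      · exact Or.inl h
      · exact Or.inr (hc₂0.1 h)
  · rintro ⟨h1, h2⟩ r hr θ
    have hx : a * c₁ = 0 := by
      rcases h1 with h | h
      · rw [h, zero_mul]
      · rw [← hc₁0] at h; rw [h, mul_zero]
    have hy : a' * c₂ = 0 := by
      rcases h2 with h | h
      · rw [h, zero_mul]
      · rw [← hc₂0] at h; rw [h, mul_zero]
    rw [main r hr θ]
    linear_combination (((r ^ ν : ℝ) : ℂ) * Complex.exp (Complex.I * ℓ * θ)) * hx +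
      (((r ^ ν : ℝ) : ℂ) * Complex.exp (-(Complex.I * ℓ * θ))) * hy
end

section
/- Let K ≥ 1 be an integer, w ∈ ℂ∖{0}, ζ = e^{2πi/K}, and for 1 ≤ k ≤ K set λ_k = ζ^{k−1}·w and s_k = (λ_k^0, λ_k^1, …, λ_k^{K−1}) ∈ ℂ^K. Then (1/K)·Σ_{k=1}^K s_k = e_1, and for each 2 ≤ i ≤ K, (1/(K·w^K))·Σ_{k=1}^K λ_k^{K−i+1}·s_k = e_i, where e_1, …, e_K denotes the standard basis of ℂ^K. In particular all of these vectors are independent of w. -/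
lemma root_sum_aux (K : ℕ) (hK : 1 ≤ K) (m : ℕ) :
    ∑ k : Fin K, Complex.exp (2 * Real.pi * Complex.I / K) ^ ((k : ℕ) * m) =
      if K ∣ m then (K : ℂ) else 0 := by
  set ζ : ℂ := Complex.exp (2 * Real.pi * Complex.I / K) with hζdef
  have hζ : IsPrimitiveRoot ζ K := Complex.isPrimitiveRoot_exp K (by omega)
  have hrw : ∀ k : Fin K, ζ ^ ((k : ℕ) * m) = (ζ ^ m) ^ (k : ℕ) := by
    intro k; rw [mul_comm, pow_mul]
  by_cases h : K ∣ m
  · have h1 : ζ ^ m = 1 := (hζ.pow_eq_one_iff_dvd m).mpr h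
    simp [hrw, h1, h]
  · have h1 : ζ ^ m ≠ 1 := fun c => h ((hζ.pow_eq_one_iff_dvd m).mp c)
    simp only [hrw, if_neg h]
    rw [Fin.sum_univ_eq_sum_range (fun k => (ζ ^ m) ^ k), geom_sum_eq h1]
    have : (ζ ^ m) ^ K = 1 := by
      rw [← pow_mul, mul_comm, pow_mul, hζ.pow_eq_one, one_pow]
    simp [this]

/-- Computational core of Proposition 2.5: with `ζ = e^{2πi/K}`, `λ_k = ζ^k w` and
`s_k = (λ_k^0, …, λ_k^{K-1}) ∈ ℂ^K` (indices `k ∈ Fin K`, i.e. `k = 0, …, K-1`),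
one has `(1/K) Σ_k s_k = e_0`, and for each `i ≠ 0`,
`(1/(K w^K)) Σ_k λ_k^{K-i} s_k = e_i`, where `e_i = Pi.single i 1` is the standard
basis of `ℂ^K`. (In the 1-indexed notation of the paper these are the sections
`s'_1, …, s'_K`.) In particular, all of these vectors are independent of `w`. -/
theorem stmt_13
    (K : ℕ) (hK : 1 ≤ K) (w : ℂ) (hw : w ≠ 0) :
    let ζ : ℂ := Complex.exp (2 * Real.pi * Complex.I / K)
    let lam : Fin K → ℂ := fun k => ζ ^ (k : ℕ) * w
    let s : Fin K → Fin K → ℂ := fun k j => lam k ^ (j : ℕ)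
    ((1 / (K : ℂ)) • ∑ k : Fin K, s k = Pi.single (⟨0, hK⟩ : Fin K) 1) ∧
    (∀ i : Fin K, i ≠ (⟨0, hK⟩ : Fin K) →
      (1 / ((K : ℂ) * w ^ K)) • ∑ k : Fin K, lam k ^ (K - (i : ℕ)) • s k =
        Pi.single i 1) := by
  intro ζ lam s
  have hK0 : (K : ℂ) ≠ 0 := Nat.cast_ne_zero.mpr (by omega)
  constructor
  · funext j
    have hterm : ∀ k : Fin K, s k j = ζ ^ ((k : ℕ) * (j : ℕ)) * w ^ (j : ℕ) := by
      intro k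
      simp only [s, lam, mul_pow, ← pow_mul]
    simp only [Pi.smul_apply, Finset.sum_apply, hterm, ← Finset.sum_mul,
      ζ, root_sum_aux K hK, smul_eq_mul]
    rcases eq_or_ne j (⟨0, hK⟩ : Fin K) with h | h
    · subst h
      rw [if_pos (dvd_zero K), Pi.single_eq_same]
      simp only [Fin.val_mk, pow_zero, mul_one]
      field_simp
    · have hj0 : (j : ℕ) ≠ 0 := fun c => h (Fin.ext c)
      have hj : ¬ K ∣ (j : ℕ) := fun c => hj0 (Nat.eq_zero_of_dvd_of_lt c j.isLt)
      rw [if_neg hj, Pi.single_eq_of_ne h]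
      ring
  · intro i hi
    funext j
    have hi1 : 1 ≤ (i : ℕ) := by
      rcases Nat.eq_zero_or_pos (i : ℕ) with h | h
      · exact absurd (Fin.ext h) hi
      · exact h
    have hterm : ∀ k : Fin K, (lam k ^ (K - (i : ℕ)) • s k) j =
        ζ ^ ((k : ℕ) * (K - (i : ℕ) + (j : ℕ))) * w ^ (K - (i : ℕ) + (j : ℕ)) := by
      intro k
      rw [Pi.smul_apply, smul_eq_mul]
      show lam k ^ (K - (i : ℕ)) * lam k ^ (j : ℕ) = _
      rw [← pow_add]
      simp only [lam, mul_pow, ← pow_mul]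
    simp only [Pi.smul_apply, Finset.sum_apply, hterm, ← Finset.sum_mul,
      ζ, root_sum_aux K hK, smul_eq_mul]
    rcases eq_or_ne j i with h | h
    · subst h
      have hE : K - (j : ℕ) + (j : ℕ) = K := by omega
      rw [hE, if_pos dvd_rfl, Pi.single_eq_same]
      have hwK : w ^ K ≠ 0 := pow_ne_zero _ hw
      field_simp
    · have hd : ¬ K ∣ (K - (i : ℕ) + (j : ℕ)) := by
        intro c
        have hle : K ≤ K - (i : ℕ) + (j : ℕ) := Nat.le_of_dvd (by omega) c
        have hd2 : K ∣ (K - (i : ℕ) + (j : ℕ) - K) := Nat.dvd_sub c dvd_rfl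
        have hlt : K - (i : ℕ) + (j : ℕ) - K < K := by have := j.isLt; omega
        have h0 : K - (i : ℕ) + (j : ℕ) - K = 0 := Nat.eq_zero_of_dvd_of_lt hd2 hlt
        have hji : (j : ℕ) = (i : ℕ) := by omega
        exact h (Fin.ext hji)
      rw [if_neg hd, Pi.single_eq_of_ne h]
      ring
end
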